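/- Let L be a relational language and let 𝒯 be a set of finitely categorical complete satisfiable L-theories (each member has a finite model) with pairwise disjoint languages. Then 𝒯 is E-closed (Cl_E(𝒯) = 𝒯) if and only if condition (i) holds — for every n ∈ ω∖{0}, if infinitely many theories in 𝒯 have an n-element model then T⁰_n ∈ 𝒯 — and there is N ∈ ω such that no theory in 𝒯 has an n-element model for any n > N. -/

import Mathlib

open FirstOrder FirstOrder.Language

universe u v

variable {L : FirstOrder.Language.{u, v}}

/-- The `E`-closure of a family of complete theories: `𝒯` together with all complete
satisfiable theories `T` such that for every sentence `φ ∈ T` the set `𝒯_φ` is infinite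
(Proposition 1.1 of the paper, taken as the definition). -/
def ClE (𝒯 : Set (L.Theory)) : Set (L.Theory) :=
  𝒯 ∪ {T | T.IsMaximal ∧ ∀ φ ∈ T, {S ∈ 𝒯 | φ ∈ S}.Infinite}

/-- `T` has a model with exactly `n` elements. -/
def HasModelCard (T : L.Theory) (n : ℕ) : Prop :=
  ∃ (M : Type (max u v)) (S : L.Structure M), Nonempty M ∧ Nat.card M = n ∧
    @FirstOrder.Language.Theory.Model L M S T

/-- `T` has a finite model, i.e. `T` is finitely categorical. -/
def HasFiniteModel (T : L.Theory) : Prop :=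
  ∃ n : ℕ, 0 < n ∧ HasModelCard T n

/-- `T` has an infinite model. -/
def HasInfiniteModel (T : L.Theory) : Prop :=
  ∃ (M : Type (max u v)) (S : L.Structure M), Infinite M ∧
    @FirstOrder.Language.Theory.Model L M S T

/-- `T` is ℵ₀-categorical: it has a countably infinite model and all its countably infinite
models are isomorphic (so it has exactly one model of cardinality ℵ₀ up to isomorphism). -/
def Aleph0Categorical (T : L.Theory) : Prop :=
  (∃ (M : Type (max u v)) (S : L.Structure M), Countable M ∧ Infinite M ∧
      @FirstOrder.Language.Theory.Model L M S T) ∧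
  ∀ (M N : Type (max u v)) (SM : L.Structure M) (SN : L.Structure N),
    @FirstOrder.Language.Theory.Model L M SM T → @FirstOrder.Language.Theory.Model L N SN T →
    Countable M → Infinite M → Countable N → Infinite N →
      Nonempty (@FirstOrder.Language.Equiv L M N SM SN)

/-- The structure on `M` (over a relational language) interpreting every relation as empty. -/
def trivialStructure (L : FirstOrder.Language.{u, v}) [L.IsRelational] (M : Type*) :
    L.Structure M where
  funMap := fun f _ => isEmptyElim f
  RelMap := fun _ _ => False

/-- `T⁰_n`: the complete theory of an `n`-element structure with all relations empty. -/
noncomputable def T0fin (L : FirstOrder.Language.{u, v}) [L.IsRelational] (n : ℕ) : L.Theory :=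
  @FirstOrder.Language.completeTheory L (Fin n) (trivialStructure L (Fin n))

/-- `T⁰_∞`: the complete theory of an infinite structure with all relations empty. -/
noncomputable def T0inf (L : FirstOrder.Language.{u, v}) [L.IsRelational] : L.Theory :=
  @FirstOrder.Language.completeTheory L ℕ (trivialStructure L ℕ)

/-- The sentence `∃ x̄, R x̄` asserting nonemptiness of the relation `R`. -/
def relNonemptySentence {n : ℕ} (R : L.Relations n) : L.Sentence :=
  (FirstOrder.Language.Relations.boundedFormula (α := Empty) (l := n) R
    fun i => FirstOrder.Language.Term.var (Sum.inr i)).exs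

/-- The theories in `𝒯` have pairwise disjoint languages: no relation symbol is asserted
nonempty by two distinct theories of `𝒯`. -/
def PairwiseDisjointLanguages (𝒯 : Set (L.Theory)) : Prop :=
  ∀ T ∈ 𝒯, ∀ T' ∈ 𝒯, T ≠ T' → ∀ (n : ℕ) (R : L.Relations n),
    ¬(relNonemptySentence R ∈ T ∧ relNonemptySentence R ∈ T')

namespace Cor26

universe w

open FirstOrder.Language.Structure Cardinal Set

lemma mem_of_realize {T : L.Theory} (hT : T.IsMaximal) {M : Type w} [L.Structure M]
    (hM : M ⊨ T) {φ : L.Sentence} (h : M ⊨ φ) : φ ∈ T := by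
  refine (hT.2 φ).resolve_right fun hc => ?_
  haveI := hM
  exact (Sentence.realize_not M).1 (T.realize_sentence_of_mem hc) h

lemma realize_relNonempty {M : Type w} [L.Structure M] {k : ℕ} (R : L.Relations k) :
    M ⊨ relNonemptySentence R ↔ ∃ x : Fin k → M, RelMap R x := by
  simp [relNonemptySentence, Sentence.Realize]

lemma eq_completeTheory {T : L.Theory} (hT : T.IsMaximal) {M : Type w} [L.Structure M]
    (hM : M ⊨ T) : T = L.completeTheory M := by
  haveI := hM
  ext φ
  constructor
  · intro h; exact mem_completeTheory.2 (T.realize_sentence_of_mem h)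
  · intro h
    refine (hT.2 φ).resolve_right fun hc => ?_
    exact (Sentence.realize_not M).1 (T.realize_sentence_of_mem hc) (mem_completeTheory.1 h)

lemma mk_of_card {M : Type w} (n : ℕ) (hn : 0 < n) (h : Nat.card M = n) :
    Cardinal.mk M = (n : Cardinal) := by
  haveI : Finite M := Nat.finite_of_card_ne_zero (by omega)
  rw [← Nat.cast_card, h]

lemma card_sentences {S : L.Theory} (hS : S.IsMaximal) {n : ℕ} (hn : 0 < n)
    (h : HasModelCard S n) :
    Sentence.cardGe L n ∈ S ∧ (Sentence.cardGe L (n + 1)).not ∈ S := by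
  obtain ⟨M, SM, hne, hcard, hmod⟩ := h
  letI := SM
  have hmk : #M = (n : Cardinal) := mk_of_card n hn hcard
  constructor
  · exact mem_of_realize hS hmod (by rw [Sentence.realize_cardGe, hmk])
  · refine mem_of_realize hS hmod ?_
    rw [Sentence.realize_not, Sentence.realize_cardGe, hmk]
    intro hle
    have : n + 1 ≤ n := by exact_mod_cast hle
    omega

lemma card_of_model {S : L.Theory} {n : ℕ}
    (h1 : Sentence.cardGe L n ∈ S) (h2 : (Sentence.cardGe L (n + 1)).not ∈ S)
    {M : Type w} [L.Structure M] (hM : M ⊨ S) : #M = (n : Cardinal) := by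
  haveI := hM
  have r1 := S.realize_sentence_of_mem (M := M) h1
  have r2 := S.realize_sentence_of_mem (M := M) h2
  rw [Sentence.realize_cardGe] at r1
  rw [Sentence.realize_not, Sentence.realize_cardGe] at r2
  refine le_antisymm ?_ r1
  have hlt : #M < Order.succ (n : Cardinal) := by
    rw [← Cardinal.nat_succ]; exact not_le.1 r2
  exact Order.lt_succ_iff.1 hlt

lemma card_eq {S : L.Theory} (hS : S.IsMaximal) {n m : ℕ} (hn : 0 < n) (hm : 0 < m)
    (h1 : HasModelCard S n) (h2 : HasModelCard S m) : n = m := by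
  obtain ⟨c1, c2⟩ := card_sentences hS hn h1
  obtain ⟨M, SM, hne, hcard, hmod⟩ := h2
  letI := SM
  have ha := card_of_model c1 c2 hmod
  have hb : #M = (m : Cardinal) := mk_of_card m hm hcard
  have : (n : Cardinal) = m := by rw [← ha, hb]
  exact_mod_cast this

lemma mem_cardGe_of_le {S : L.Theory} (hS : S.IsMaximal) {n m : ℕ} (hn : 0 < n)
    (h : HasModelCard S n) (hle : m ≤ n) : Sentence.cardGe L m ∈ S := by
  obtain ⟨M, SM, hne, hcard, hmod⟩ := h
  letI := SM
  have hmk : #M = (n : Cardinal) := mk_of_card n hn hcard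
  refine mem_of_realize hS hmod ?_
  rw [Sentence.realize_cardGe, hmk]
  exact_mod_cast hle

lemma ultra (𝒮 : Set L.Theory) (hinf : 𝒮.Infinite) (hSmax : ∀ S ∈ 𝒮, S.IsMaximal) :
    ∃ T : L.Theory, T.IsMaximal ∧ (∀ φ ∈ T, {S ∈ 𝒮 | φ ∈ S}.Infinite) ∧
      (∀ φ : L.Sentence, {S ∈ 𝒮 | φ ∉ S}.Finite → φ ∈ T) := by
  haveI := hinf.to_subtype
  classical
  refine ⟨{φ | {S : ↥𝒮 | φ ∈ (S : L.Theory)} ∈ Filter.hyperfilter ↥𝒮}, ⟨?_, ?_⟩, ?_, ?_⟩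
  · rw [Theory.isSatisfiable_iff_isFinitelySatisfiable]
    intro T0 hT0
    have hmem : (⋂ φ ∈ T0, {S : ↥𝒮 | φ ∈ (S : L.Theory)}) ∈ Filter.hyperfilter ↥𝒮 :=
      (Filter.biInter_finset_mem T0).2 fun φ hφ => hT0 hφ
    obtain ⟨S, hS⟩ := Ultrafilter.nonempty_of_mem hmem
    refine Theory.IsSatisfiable.mono (hSmax S S.2).1 ?_
    intro φ hφ
    exact Set.mem_iInter₂.1 hS φ hφ
  · intro φ
    by_cases h : {S : ↥𝒮 | φ ∈ (S : L.Theory)} ∈ Filter.hyperfilter ↥𝒮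
    · exact Or.inl h
    · right
      have hc : {S : ↥𝒮 | φ ∈ (S : L.Theory)}ᶜ ∈ Filter.hyperfilter ↥𝒮 :=
        Ultrafilter.compl_mem_iff_notMem.2 h
      refine Ultrafilter.mem_coe.1 (Filter.mem_of_superset (Ultrafilter.mem_coe.2 hc) ?_)
      intro S hS
      exact ((hSmax S S.2).2 φ).resolve_left hS
  · intro φ hφ
    have h1 : {S : ↥𝒮 | φ ∈ (S : L.Theory)}.Infinite := by
      by_contra h
      rw [Set.not_infinite] at h
      exact Set.Finite.notMem_hyperfilter h hφ
    have h2 : ((Subtype.val : ↥𝒮 → L.Theory) ''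
        {S : ↥𝒮 | φ ∈ (S : L.Theory)}).Infinite :=
      (Set.infinite_image_iff (Subtype.val_injective.injOn)).2 h1
    refine h2.mono ?_
    rintro _ ⟨S, hS, rfl⟩
    exact ⟨S.2, hS⟩
  · intro φ h
    show {S : ↥𝒮 | φ ∈ (S : L.Theory)} ∈ Filter.hyperfilter ↥𝒮
    have hfin : {S : ↥𝒮 | φ ∉ (S : L.Theory)}.Finite := by
      refine Set.Finite.subset (h.preimage (f := (Subtype.val : ↥𝒮 → L.Theory))
        (Subtype.val_injective.injOn)) ?_
      intro x hx
      exact ⟨x.2, hx⟩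
    have := Filter.compl_mem_hyperfilter_of_finite hfin
    simpa [Set.compl_setOf] using this

lemma eq_T0fin [L.IsRelational] {T : L.Theory} (hT : T.IsMaximal)
    {M : Type (max u v)} [SM : L.Structure M] (hM : M ⊨ T) {n : ℕ} (hn : 0 < n)
    (hcard : Nat.card M = n)
    (hemp : ∀ (k : ℕ) (R : L.Relations k) (x : Fin k → M), ¬ RelMap R x) :
    T = T0fin L n := by
  haveI : Finite M := Nat.finite_of_card_ne_zero (by omega)
  letI : L.Structure (Fin n) := trivialStructure L (Fin n)
  let g : M ≃[L] Fin n :=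
    { toEquiv := Finite.equivFinOfCardEq hcard
      map_fun' := fun {k} f _ => isEmptyElim f
      map_rel' := fun {k} r x =>
        Iff.intro (fun h => False.elim h) (fun h => absurd h (hemp k r x)) }
  have h2 : L.completeTheory M = L.completeTheory (Fin n) := Set.ext fun φ => by
    simp only [mem_completeTheory]
    exact StrongHomClass.realize_sentence g φ
  rw [eq_completeTheory hT hM, h2]
  rfl

end Cor26

open Cor26 FirstOrder.Language.Structure Cardinal Set

/-- Corollary 2.6: a class `𝒯` of finitely categorical complete theories with pairwise
disjoint languages is `E`-closed iff condition (i) holds and the finite cardinalities of models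
of theories of `𝒯` are bounded by some `N`. -/
theorem cor_2_6 (L : FirstOrder.Language.{u, v}) [L.IsRelational]
    (𝒯 : Set (L.Theory)) (hmax : ∀ T ∈ 𝒯, T.IsMaximal)
    (hfin : ∀ T ∈ 𝒯, HasFiniteModel T)
    (hdisj : PairwiseDisjointLanguages 𝒯) :
    ClE 𝒯 = 𝒯 ↔
      ((∀ n : ℕ, 0 < n → {T ∈ 𝒯 | HasModelCard T n}.Infinite → T0fin L n ∈ 𝒯) ∧
       ∃ N : ℕ, ∀ T ∈ 𝒯, ∀ n : ℕ, N < n → ¬HasModelCard T n) := by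
  constructor
  · intro hE
    constructor
    · -- condition (i)
      intro n hn hAinf
      obtain ⟨T, hTmax, hTinf, hTcof⟩ :=
        ultra {S ∈ 𝒯 | HasModelCard S n} hAinf (fun S hS => hmax S hS.1)
      have hT𝒯 : T ∈ 𝒯 := by
        have : T ∈ ClE 𝒯 := Set.mem_union_right _
          ⟨hTmax, fun φ hφ => (hTinf φ hφ).mono fun S hS => ⟨hS.1.1, hS.2⟩⟩
        rwa [hE] at this
      have h1 : Sentence.cardGe L n ∈ T := by
        refine hTcof _ (Set.Finite.subset Set.finite_empty ?_)
        rintro S ⟨hSA, hnot⟩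
        exact (hnot ((card_sentences (hmax _ hSA.1) hn hSA.2).1)).elim
      have h2 : (Sentence.cardGe L (n + 1)).not ∈ T := by
        refine hTcof _ (Set.Finite.subset Set.finite_empty ?_)
        rintro S ⟨hSA, hnot⟩
        exact (hnot ((card_sentences (hmax _ hSA.1) hn hSA.2).2)).elim
      have hR : ∀ (k : ℕ) (R : L.Relations k), (relNonemptySentence R).not ∈ T := by
        intro k R
        refine hTcof _ (Set.Subsingleton.finite ?_)
        rintro S ⟨hSA, hS⟩ S' ⟨hSA', hS'⟩
        have hSrel : relNonemptySentence R ∈ S := ((hmax _ hSA.1).2 _).resolve_right hS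
        have hS'rel : relNonemptySentence R ∈ S' := ((hmax _ hSA'.1).2 _).resolve_right hS'
        by_contra hne
        exact hdisj S hSA.1 S' hSA'.1 hne k R ⟨hSrel, hS'rel⟩
      obtain ⟨M⟩ := hTmax.1
      have hmk : #M = (n : Cardinal) := card_of_model h1 h2 M.is_model
      have hNcard : Nat.card M = n := by
        show Cardinal.toNat (#M) = n
        rw [hmk, Cardinal.toNat_natCast]
      have hemp : ∀ (k : ℕ) (R : L.Relations k) (x : Fin k → M), ¬ RelMap R x := by
        intro k R x hx
        have := T.realize_sentence_of_mem (M := M) (hR k R)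
        exact (Sentence.realize_not (M : Type (max u v))).1 this
          ((realize_relNonempty R).2 ⟨x, hx⟩)
      have := eq_T0fin hTmax M.is_model hn hNcard hemp
      exact this ▸ hT𝒯
    · -- boundedness
      by_contra hub
      push_neg at hub
      have key : ∀ N : ℕ, ∃ p : L.Theory × ℕ, p.1 ∈ 𝒯 ∧ N < p.2 ∧ HasModelCard p.1 p.2 := by
        intro N
        obtain ⟨T, hT, m, hm, h⟩ := hub N
        exact ⟨(T, m), hT, hm, h⟩
      let F : ℕ → L.Theory × ℕ := fun k =>
        Nat.rec (Classical.choose (key 0)) (fun _ p => Classical.choose (key p.2)) k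
      have hF0 : (F 0).1 ∈ 𝒯 ∧ 0 < (F 0).2 ∧ HasModelCard (F 0).1 (F 0).2 :=
        Classical.choose_spec (key 0)
      have hFs : ∀ k, (F (k + 1)).1 ∈ 𝒯 ∧ (F k).2 < (F (k + 1)).2 ∧
          HasModelCard (F (k + 1)).1 (F (k + 1)).2 := fun k => Classical.choose_spec (key (F k).2)
      have hmem : ∀ k, (F k).1 ∈ 𝒯 := by
        intro k; cases k with
        | zero => exact hF0.1
        | succ k => exact (hFs k).1
      have hcard : ∀ k, HasModelCard (F k).1 (F k).2 := by
        intro k; cases k with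
        | zero => exact hF0.2.2
        | succ k => exact (hFs k).2.2
      have hmono : StrictMono fun k => (F k).2 :=
        strictMono_nat_of_lt_succ fun k => (hFs k).2.1
      have hpos : ∀ k, 0 < (F k).2 :=
        fun k => hF0.2.1.trans_le (hmono.monotone (Nat.zero_le k))
      have hge : ∀ k, k < (F k).2 := by
        intro k
        induction k with
        | zero => exact hF0.2.1
        | succ k ih => have := (hFs k).2.1; omega
      have hinj : Function.Injective fun k => (F k).1 := by
        intro a b hab
        have hab' : (F a).1 = (F b).1 := hab
        have h2 : HasModelCard (F a).1 (F b).2 := by rw [hab']; exact hcard b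
        exact hmono.injective (card_eq (hmax _ (hmem a)) (hpos a) (hpos b) (hcard a) h2)
      have hSsub : Set.range (fun k => (F k).1) ⊆ 𝒯 := by
        rintro _ ⟨k, rfl⟩; exact hmem k
      obtain ⟨T, hTmax, hTinf, hTcof⟩ :=
        ultra (Set.range fun k => (F k).1) (Set.infinite_range_of_injective hinj)
          (fun S hS => hmax S (hSsub hS))
      have hT𝒯 : T ∈ 𝒯 := by
        have : T ∈ ClE 𝒯 := Set.mem_union_right _
          ⟨hTmax, fun φ hφ => (hTinf φ hφ).mono fun S hS => ⟨hSsub hS.1, hS.2⟩⟩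
        rwa [hE] at this
      obtain ⟨m, hm, hMC⟩ := hfin T hT𝒯
      have hcg : Sentence.cardGe L (m + 1) ∈ T := by
        refine hTcof _ (Set.Finite.subset ((Set.finite_Iio (m + 1)).image fun k => (F k).1) ?_)
        rintro _ ⟨⟨k, rfl⟩, hnot⟩
        refine ⟨k, ?_, rfl⟩
        by_contra hk
        rw [Set.mem_Iio, not_lt] at hk
        exact hnot (mem_cardGe_of_le (hmax _ (hmem k)) (hpos k) (hcard k)
          (by have := hge k; omega))
      obtain ⟨M, SM, hne, hcd, hmod⟩ := hMC
      letI := SM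
      have hmk : #M = (m : Cardinal) := mk_of_card m hm hcd
      haveI := hmod
      have := T.realize_sentence_of_mem (M := M) hcg
      rw [Sentence.realize_cardGe, hmk] at this
      have : m + 1 ≤ m := by exact_mod_cast this
      omega
  · rintro ⟨hi, N, hbound⟩
    refine Set.Subset.antisymm ?_ Set.subset_union_left
    rintro T (hT | ⟨hTmax, hTinf⟩)
    · exact hT
    have hnotbig : (Sentence.cardGe L (N + 1)).not ∈ T := by
      rcases hTmax.2 (Sentence.cardGe L (N + 1)) with h | h
      · exfalso
        obtain ⟨S, hS𝒯, hSmem⟩ := (hTinf _ h).nonempty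
        obtain ⟨m, hm, M, SM, hne, hcd, hmod⟩ := hfin S hS𝒯
        letI := SM
        haveI := hmod
        have hr := S.realize_sentence_of_mem (M := M) hSmem
        rw [Sentence.realize_cardGe, mk_of_card m hm hcd] at hr
        have hmN : N + 1 ≤ m := by exact_mod_cast hr
        exact hbound S hS𝒯 m (by omega) ⟨M, SM, hne, hcd, hmod⟩
      · exact h
    have hR : ∀ (k : ℕ) (R : L.Relations k), (relNonemptySentence R).not ∈ T := by
      intro k R
      rcases hTmax.2 (relNonemptySentence R) with h | h
      · exfalso
        have hsub : {S ∈ 𝒯 | relNonemptySentence R ∈ S}.Subsingleton := by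
          rintro S ⟨hS, hS2⟩ S' ⟨hS', hS2'⟩
          by_contra hne
          exact hdisj S hS S' hS' hne k R ⟨hS2, hS2'⟩
        exact (hTinf _ h) hsub.finite
      · exact h
    obtain ⟨M⟩ := hTmax.1
    have hlt : #M < ℵ₀ := by
      have hr := T.realize_sentence_of_mem (M := M) hnotbig
      rw [Sentence.realize_not, Sentence.realize_cardGe] at hr
      exact (not_le.1 hr).trans (Cardinal.nat_lt_aleph0 _)
    haveI hfinM : Finite M := Cardinal.lt_aleph0_iff_finite.1 hlt
    have hnpos : 0 < Nat.card M := Nat.card_pos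
    set n := Nat.card M with hn
    have hmk : #M = (n : Cardinal) := (Nat.cast_card).symm
    have hemp : ∀ (k : ℕ) (R : L.Relations k) (x : Fin k → M), ¬ RelMap R x := by
      intro k R x hx
      have := T.realize_sentence_of_mem (M := M) (hR k R)
      exact (Sentence.realize_not (M : Type (max u v))).1 this
        ((realize_relNonempty R).2 ⟨x, hx⟩)
    have hTeq : T = T0fin L n := eq_T0fin hTmax M.is_model hnpos rfl hemp
    have h1 : Sentence.cardGe L n ∈ T :=
      mem_of_realize hTmax M.is_model (by rw [Sentence.realize_cardGe, hmk])
    have h2 : (Sentence.cardGe L (n + 1)).not ∈ T := by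
      refine mem_of_realize hTmax M.is_model ?_
      rw [Sentence.realize_not, Sentence.realize_cardGe, hmk]
      intro hle
      have : n + 1 ≤ n := by exact_mod_cast hle
      omega
    have hφT : (Sentence.cardGe L n ⊓ (Sentence.cardGe L (n + 1)).not) ∈ T := by
      refine mem_of_realize hTmax M.is_model ?_
      have r1 := T.realize_sentence_of_mem (M := M) h1
      have r2 := T.realize_sentence_of_mem (M := M) h2
      exact (Formula.realize_inf).2 ⟨r1, r2⟩
    have hsub2 : {S ∈ 𝒯 | (Sentence.cardGe L n ⊓ (Sentence.cardGe L (n + 1)).not) ∈ S} ⊆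
        {S ∈ 𝒯 | HasModelCard S n} := by
      rintro S ⟨hS, hSφ⟩
      obtain ⟨m, hm, M', SM', hne', hcd', hmod'⟩ := hfin S hS
      letI := SM'
      haveI := hmod'
      have hr := S.realize_sentence_of_mem (M := M') hSφ
      obtain ⟨hr1, hr2⟩ := (Formula.realize_inf).1 hr
      have hr1' : M' ⊨ Sentence.cardGe L n := hr1
      have hr2' : M' ⊨ (Sentence.cardGe L (n + 1)).not := hr2
      rw [Sentence.realize_cardGe, mk_of_card m hm hcd'] at hr1'
      rw [Sentence.realize_not, Sentence.realize_cardGe, mk_of_card m hm hcd'] at hr2'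
      have hle1 : n ≤ m := by exact_mod_cast hr1'
      have hle2 : ¬ (n + 1 ≤ m) := fun h => hr2' (by exact_mod_cast h)
      have hmn : m = n := by omega
      exact ⟨hS, M', SM', hne', by rw [hcd', hmn], hmod'⟩
    have hT0 : T0fin L n ∈ 𝒯 := hi n hnpos ((hTinf _ hφT).mono hsub2)
    rwa [hTeq]
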